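/- Discrete duality identity (eq. duality_1 of the paper): suppose y⁰ = 0 and (y^{n+1} − y^n)/δt + A y^{n+1} = B v^{n+1} for all n with 0 ≤ n ≤ M−1, and suppose p^{M+1} = 0 and (p^n − p^{n+1})/δt + Aᵀ p^n = f^n − σ^n for all n with 1 ≤ n ≤ M. Then Σ_{n=1}^{M} δt ⟨y^n, f^n − σ^n⟩ = Σ_{n=1}^{M} δt ⟨B v^n, p^n⟩. -/

import Mathlib

open Matrix
/-- Discrete duality identity (eq. duality_1): if `y⁰ = 0`,
`(y^{n+1} − y^n)/δt + A y^{n+1} = B v^{n+1}` for `0 ≤ n ≤ M−1`, `p^{M+1} = 0` and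
`(p^n − p^{n+1})/δt + Aᵀ p^n = f^n − σ^n` for `1 ≤ n ≤ M`, then
`Σ_{n=1}^{M} δt ⟨y^n, f^n − σ^n⟩ = Σ_{n=1}^{M} δt ⟨B v^n, p^n⟩`. -/
theorem stmt_15 {N M : ℕ} (hN : 1 ≤ N) (hM : 1 ≤ M)
    (δt : ℝ) (hδt : 0 < δt)
    (A B : Matrix (Fin N) (Fin N) ℝ)
    (y v p f σ : ℕ → (Fin N → ℝ))
    (hy0 : y 0 = 0)
    (hy : ∀ n, n ≤ M - 1 →
      (1 / δt) • (y (n + 1) - y n) + A.mulVec (y (n + 1)) = B.mulVec (v (n + 1)))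
    (hpM : p (M + 1) = 0)
    (hp : ∀ n, 1 ≤ n → n ≤ M →
      (1 / δt) • (p n - p (n + 1)) + Aᵀ.mulVec (p n) = f n - σ n) :
    ∑ n ∈ Finset.Icc 1 M, δt * (y n ⬝ᵥ (f n - σ n))
      = ∑ n ∈ Finset.Icc 1 M, δt * (B.mulVec (v n) ⬝ᵥ p n) := by
  rw [← sub_eq_zero, ← Finset.sum_sub_distrib]
  have hδ : δt ≠ 0 := ne_of_gt hδt
  have key : ∀ n ∈ Finset.Icc 1 M,
      δt * (y n ⬝ᵥ (f n - σ n)) - δt * (B.mulVec (v n) ⬝ᵥ p n)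
        = y (n - 1) ⬝ᵥ p n - y n ⬝ᵥ p (n + 1) := by
    intro n hn
    obtain ⟨h1, h2⟩ := Finset.mem_Icc.mp hn
    have hpn := hp n h1 h2
    have hyn := hy (n - 1) (Nat.sub_le_sub_right h2 1)
    rw [Nat.sub_add_cancel h1] at hyn
    rw [← hpn, ← hyn]
    have htrans : y n ⬝ᵥ Aᵀ.mulVec (p n) = A.mulVec (y n) ⬝ᵥ p n := by
      rw [Matrix.dotProduct_mulVec, Matrix.vecMul_transpose]
    simp only [dotProduct_add, add_dotProduct,
      dotProduct_smul, smul_dotProduct, smul_eq_mul,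
      dotProduct_sub, sub_dotProduct, htrans]
    field_simp
    ring
  rw [Finset.sum_congr rfl key]
  have : ∑ n ∈ Finset.Icc 1 M, (y (n - 1) ⬝ᵥ p n - y n ⬝ᵥ p (n + 1))
      = ∑ i ∈ Finset.range M, (y i ⬝ᵥ p (i + 1) - y (i + 1) ⬝ᵥ p (i + 2)) := by
    rw [← Finset.Ico_add_one_right_eq_Icc, Finset.sum_Ico_eq_sum_range]
    simp [add_comm 1]
  rw [this, Finset.sum_range_sub' (fun i => y i ⬝ᵥ p (i + 1)), hy0, hpM]
  simp
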